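/- If A is a definite max-plus matrix, then its eigenspace for eigenvalue 0 equals the column span of its Kleene star: eig(A) = span(A*). -/

import Mathlib

namespace MaxPlus

/-- Max-plus (tropical) matrix product over `EReal` (`⊥ = -∞` is the max-plus zero,
`+` is the max-plus multiplication, `⊔`/`⨆` is the max-plus addition). -/
noncomputable def mmul {n : ℕ} (A B : Matrix (Fin n) (Fin n) EReal) : Matrix (Fin n) (Fin n) EReal :=
  fun i j => ⨆ k, A i k + B k j

/-- The max-plus identity matrix. -/
noncomputable def mId (n : ℕ) : Matrix (Fin n) (Fin n) EReal := fun i j => if i = j then 0 else ⊥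

/-- Max-plus matrix powers. -/
noncomputable def mpow {n : ℕ} (A : Matrix (Fin n) (Fin n) EReal) : ℕ → Matrix (Fin n) (Fin n) EReal
  | 0 => mId n
  | m + 1 => mmul (mpow A m) A

/-- The max-plus Kleene star `A* = I ⊕ A ⊕ A² ⊕ ⋯` (entrywise supremum of all powers). -/
noncomputable def mstar {n : ℕ} (A : Matrix (Fin n) (Fin n) EReal) : Matrix (Fin n) (Fin n) EReal :=
  fun i j => ⨆ m, mpow A m i j

/-- Weight of the cycle determined by the list `l = [i₁,…,i_k]`,
namely `A i₁ i₂ + ⋯ + A i_k i₁`. -/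
noncomputable def cycleWeight {n : ℕ} (A : Matrix (Fin n) (Fin n) EReal) (l : List (Fin n)) : EReal :=
  ((l.zip (l.rotate 1)).map fun p => A p.1 p.2).sum

/-- A nonempty list of pairwise distinct indices, representing an elementary cycle. -/
def IsCycle {n : ℕ} (l : List (Fin n)) : Prop := l ≠ [] ∧ l.Nodup

/-- All elementary cycles have nonpositive weight, i.e. the maximal cycle mean `λ(A) ≤ 0`. -/
def CycleBound {n : ℕ} (A : Matrix (Fin n) (Fin n) EReal) : Prop :=
  ∀ l : List (Fin n), IsCycle l → cycleWeight A l ≤ 0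

/-- A definite matrix: maximal cycle mean `0` and zero (max-plus unit) diagonal.
(The diagonal entries give cycles of weight `0`, so `λ(A) = 0` is equivalent to
`CycleBound A` here.) -/
def Definite {n : ℕ} (A : Matrix (Fin n) (Fin n) EReal) : Prop :=
  CycleBound A ∧ ∀ i, A i i = 0

/-- Max-plus action of a matrix on a vector: `(A ⊙ x)_i = max_j (A_{ij} + x_j)`. -/
noncomputable def mapVec {n : ℕ} (A : Matrix (Fin n) (Fin n) EReal) (x : Fin n → EReal) :
    Fin n → EReal :=
  fun i => ⨆ j, A i j + x j

/-- The max-plus eigenspace of `A` for the eigenvalue `0`. -/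
def eig {n : ℕ} (A : Matrix (Fin n) (Fin n) EReal) : Set (Fin n → EReal) :=
  {x | mapVec A x = x}

/-- The max-plus column span of a matrix. -/
def mspan {n : ℕ} (A : Matrix (Fin n) (Fin n) EReal) : Set (Fin n → EReal) :=
  {y | ∃ α : Fin n → EReal, y = fun i => ⨆ j, α j + A i j}

lemma add_iSup' {ι : Sort*} (a : EReal) (f : ι → EReal) : a + ⨆ i, f i = ⨆ i, a + f i := by
  refine le_antisymm ?_ (iSup_le fun i => add_le_add_right (le_iSup f i) a)
  induction a using EReal.rec with
  | bot => simp
  | top =>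
    by_cases h : (⨆ i, f i) = ⊥
    · simp [h]
    · rw [iSup_eq_bot] at h
      push_neg at h
      obtain ⟨i, hi⟩ := h
      calc (⊤ : EReal) + ⨆ i, f i ≤ ⊤ := le_top
        _ = ⊤ + f i := (EReal.top_add_of_ne_bot hi).symm
        _ ≤ ⨆ i, ⊤ + f i := le_iSup (fun i => (⊤ : EReal) + f i) i
  | coe a =>
    rw [add_comm]
    refine (EReal.le_sub_iff_add_le (Or.inl (EReal.coe_ne_bot a))
      (Or.inl (EReal.coe_ne_top a))).1 ?_
    refine iSup_le fun i => (EReal.le_sub_iff_add_le (Or.inl (EReal.coe_ne_bot a))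
      (Or.inl (EReal.coe_ne_top a))).2 ?_
    rw [add_comm]
    exact le_iSup (fun i => (a : EReal) + f i) i

lemma iSup_add' {ι : Sort*} (a : EReal) (f : ι → EReal) : (⨆ i, f i) + a = ⨆ i, f i + a := by
  rw [add_comm, add_iSup']
  exact iSup_congr fun i => add_comm _ _

lemma mapVec_mId {n : ℕ} (x : Fin n → EReal) : mapVec (mId n) x = x := by
  funext i
  refine le_antisymm (iSup_le fun j => ?_) ?_
  · by_cases h : i = j
    · simp [mId, h]
    · simp [mId, h]
  · have : mId n i i + x i = x i := by simp [mId]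
    calc x i = mId n i i + x i := this.symm
      _ ≤ ⨆ j, mId n i j + x j := le_iSup (fun j => mId n i j + x j) i

lemma mapVec_mmul {n : ℕ} (B C : Matrix (Fin n) (Fin n) EReal) (x : Fin n → EReal) :
    mapVec (mmul B C) x = mapVec B (mapVec C x) := by
  funext i
  simp only [mapVec, mmul]
  have h1 : ∀ j, (⨆ k, B i k + C k j) + x j = ⨆ k, B i k + (C k j + x j) := by
    intro j
    rw [iSup_add']
    exact iSup_congr fun k => add_assoc _ _ _
  simp only [h1]
  rw [iSup_comm]
  exact iSup_congr fun k => (add_iSup' _ _).symm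

lemma mmul_assoc {n : ℕ} (A B C : Matrix (Fin n) (Fin n) EReal) :
    mmul (mmul A B) C = mmul A (mmul B C) := by
  funext i j
  simp only [mmul]
  have h1 : ∀ l, (⨆ k, A i k + B k l) + C l j = ⨆ k, A i k + (B k l + C l j) := by
    intro l
    rw [iSup_add']
    exact iSup_congr fun k => add_assoc _ _ _
  simp only [h1]
  rw [iSup_comm]
  exact iSup_congr fun k => (add_iSup' _ _).symm

lemma mmul_mId {n : ℕ} (B : Matrix (Fin n) (Fin n) EReal) : mmul B (mId n) = B := by
  funext i j
  refine le_antisymm (iSup_le fun k => ?_) ?_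
  · by_cases h : k = j
    · simp [mId, h]
    · simp [mId, h]
  · have : B i j + mId n j j = B i j := by simp [mId]
    calc B i j = B i j + mId n j j := this.symm
      _ ≤ ⨆ k, B i k + mId n k j := le_iSup (fun k => B i k + mId n k j) j

lemma mId_mmul {n : ℕ} (B : Matrix (Fin n) (Fin n) EReal) : mmul (mId n) B = B := by
  funext i j
  refine le_antisymm (iSup_le fun k => ?_) ?_
  · by_cases h : i = k
    · simp [mId, h]
    · simp [mId, h]
  · have : mId n i i + B i j = B i j := by simp [mId]
    calc B i j = mId n i i + B i j := this.symm
      _ ≤ ⨆ k, mId n i k + B k j := le_iSup (fun k => mId n i k + B k j) i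

lemma mmul_mpow {n : ℕ} (A : Matrix (Fin n) (Fin n) EReal) (m : ℕ) :
    mmul A (mpow A m) = mpow A (m + 1) := by
  induction m with
  | zero => simp [mpow, mmul_mId, mId_mmul]
  | succ m ih =>
    show mmul A (mmul (mpow A m) A) = mmul (mpow A (m + 1)) A
    rw [← mmul_assoc, ih]

lemma mpow_eig {n : ℕ} (A : Matrix (Fin n) (Fin n) EReal) (x : Fin n → EReal)
    (hx : mapVec A x = x) (m : ℕ) : mapVec (mpow A m) x = x := by
  induction m with
  | zero => exact mapVec_mId x
  | succ m ih => rw [mpow, mapVec_mmul, hx, ih]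

lemma mapVec_mstar {n : ℕ} (A : Matrix (Fin n) (Fin n) EReal) (x : Fin n → EReal)
    (hx : mapVec A x = x) : mapVec (mstar A) x = x := by
  funext i
  simp only [mapVec, mstar]
  have h1 : ∀ j, (⨆ m, mpow A m i j) + x j = ⨆ m, mpow A m i j + x j := fun j => iSup_add' _ _
  simp only [h1]
  rw [iSup_comm]
  have h2 : ∀ m, (⨆ j, mpow A m i j + x j) = x i := by
    intro m
    have := congrFun (mpow_eig A x hx m) i
    simpa [mapVec] using this
  simp only [h2, iSup_const]

lemma mmul_mstar_le {n : ℕ} (A : Matrix (Fin n) (Fin n) EReal) (i j : Fin n) :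
    mmul A (mstar A) i j ≤ mstar A i j := by
  simp only [mmul, mstar]
  refine iSup_le fun k => ?_
  rw [add_iSup']
  refine iSup_le fun m => ?_
  have h1 : A i k + mpow A m k j ≤ mmul A (mpow A m) i j :=
    le_iSup (fun k => A i k + mpow A m k j) k
  rw [mmul_mpow] at h1
  exact h1.trans (le_iSup (fun m => mpow A m i j) (m + 1))

/-- For a definite matrix, the eigenspace for the eigenvalue `0` is the max-plus column
span of its Kleene star: `eig(A) = span(A*)`. -/
theorem eig_eq_span_mstar {n : ℕ} (A : Matrix (Fin n) (Fin n) EReal)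
    (hd : Definite A) :
    eig A = mspan (mstar A) := by
  ext x
  constructor
  · intro hx
    refine ⟨x, ?_⟩
    funext i
    have := congrFun (mapVec_mstar A x hx) i
    simp only [mapVec] at this
    rw [← this]
    exact iSup_congr fun j => add_comm _ _
  · rintro ⟨α, rfl⟩
    show mapVec A _ = _
    funext i
    simp only [mapVec]
    have key : (⨆ k, A i k + ⨆ j, α j + mstar A k j) = ⨆ j, α j + mmul A (mstar A) i j := by
      have h1 : ∀ k, A i k + ⨆ j, α j + mstar A k j = ⨆ j, α j + (A i k + mstar A k j) := by
        intro k
        rw [add_iSup']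
        exact iSup_congr fun j => add_left_comm _ _ _
      simp only [h1]
      rw [iSup_comm]
      refine iSup_congr fun j => ?_
      rw [← add_iSup']
      rfl
    rw [key]
    refine le_antisymm (iSup_mono fun j => add_le_add_right (mmul_mstar_le A i j) (α j)) ?_
    have h2 : (⨆ j, α j + mstar A i j) = A i i + ⨆ j, α j + mstar A i j := by
      rw [hd.2 i, zero_add]
    calc (⨆ j, α j + mstar A i j)
        = A i i + ⨆ j, α j + mstar A i j := h2
      _ ≤ ⨆ k, A i k + ⨆ j, α j + mstar A k j :=
          le_iSup (fun k => A i k + ⨆ j, α j + mstar A k j) i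
      _ = ⨆ j, α j + mmul A (mstar A) i j := key


end MaxPlus
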